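/- In a signature split into disjoint sub-signatures, every formula is logically equivalent to a formula in generalized disjunctive normal form: a disjunction of conjunctions, where each conjunct is a formula in a single one of the sub-signatures (with at most one conjunct per sub-signature in each disjunct). -/

import Mathlib

set_option autoImplicit false

/-- A many-sorted first-order signature. -/
structure MSSignature : Type 1 where
  Sorts : Type
  Func : Type
  Pred : Type
  funcDom : Func → List Sorts
  funcCod : Func → Sorts
  predDom : Pred → List Sorts

namespace MS

variable (Sg : MSSignature)

/-- Many-sorted terms; variables of each sort are indexed by naturals. -/
inductive Term : Sg.Sorts → Type where
  | var (s : Sg.Sorts) (n : ℕ) : Term s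
  | app (f : Sg.Func)
      (args : ∀ i : Fin (Sg.funcDom f).length, Term ((Sg.funcDom f).get i)) :
      Term (Sg.funcCod f)

/-- Many-sorted first-order formulas. -/
inductive Formula : Type where
  | eq {s : Sg.Sorts} (t u : Term Sg s) : Formula
  | pred (P : Sg.Pred)
      (args : ∀ i : Fin (Sg.predDom P).length, Term Sg ((Sg.predDom P).get i)) : Formula
  | falsum : Formula
  | imp (φ ψ : Formula) : Formula
  | all (s : Sg.Sorts) (n : ℕ) (φ : Formula) : Formula

/-- A structure for a many-sorted signature: each sort gets a nonempty domain. -/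
structure Structure : Type 1 where
  dom : Sg.Sorts → Type
  dom_nonempty : ∀ s, Nonempty (dom s)
  interpFunc : ∀ f : Sg.Func,
    (∀ i : Fin (Sg.funcDom f).length, dom ((Sg.funcDom f).get i)) → dom (Sg.funcCod f)
  interpPred : ∀ P : Sg.Pred,
    (∀ i : Fin (Sg.predDom P).length, dom ((Sg.predDom P).get i)) → Prop

variable {Sg}

/-- Variable assignments. -/
def Assign (A : Structure Sg) : Type := ∀ s : Sg.Sorts, ℕ → A.dom s

open Classical in
noncomputable
def Assign.update {A : Structure Sg} (ν : Assign A) (s : Sg.Sorts) (n : ℕ) (a : A.dom s) :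
    Assign A := fun t m =>
  if h : s = t then (if m = n then h ▸ a else ν t m) else ν t m

def Term.eval {A : Structure Sg} (ν : Assign A) : ∀ {s : Sg.Sorts}, Term Sg s → A.dom s
  | _, .var s n => ν s n
  | _, .app f args => A.interpFunc f fun i => Term.eval ν (args i)

/-- Tarskian satisfaction. -/
def Sat (A : Structure Sg) (ν : Assign A) : Formula Sg → Prop
  | .eq t u => t.eval ν = u.eval ν
  | .pred P args => A.interpPred P fun i => (args i).eval ν
  | .falsum => False
  | .imp φ ψ => Sat A ν φ → Sat A ν ψ
  | .all s n φ => ∀ a : A.dom s, Sat A (ν.update s n a) φ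

/-- Derived connectives. -/
def Formula.not (φ : Formula Sg) : Formula Sg := .imp φ .falsum
def Formula.and (φ ψ : Formula Sg) : Formula Sg := (Formula.imp φ ψ.not).not
def Formula.or (φ ψ : Formula Sg) : Formula Sg := .imp φ.not ψ
def Formula.ex (s : Sg.Sorts) (n : ℕ) (φ : Formula Sg) : Formula Sg :=
  ((Formula.all s n φ.not)).not
def Formula.andList : List (Formula Sg) → Formula Sg :=
  List.foldr Formula.and (Formula.not .falsum)
def Formula.orList : List (Formula Sg) → Formula Sg :=
  List.foldr Formula.or .falsum

/-- Occurrence of variable `(s, n)` in a term. -/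
def Term.varOccurs (s : Sg.Sorts) (n : ℕ) : ∀ {t : Sg.Sorts}, Term Sg t → Prop
  | _, .var s' n' => s = s' ∧ n = n'
  | _, .app _ args => ∃ i, Term.varOccurs s n (args i)

/-- Free occurrence of variable `(s, n)` in a formula. -/
def Formula.varFree (s : Sg.Sorts) (n : ℕ) : Formula Sg → Prop
  | .eq t u => t.varOccurs s n ∨ u.varOccurs s n
  | .pred _ args => ∃ i, (args i).varOccurs s n
  | .falsum => False
  | .imp φ ψ => φ.varFree s n ∨ ψ.varFree s n
  | .all s' n' φ => φ.varFree s n ∧ ¬(s = s' ∧ n = n')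

def Formula.IsSentence (φ : Formula Sg) : Prop := ∀ s n, ¬ φ.varFree s n

/-- Quantifier-free formulas. -/
def Formula.IsQF : Formula Sg → Prop
  | .eq _ _ => True
  | .pred _ _ => True
  | .falsum => True
  | .imp φ ψ => φ.IsQF ∧ ψ.IsQF
  | .all _ _ _ => False

/-- A structure is a model of a set of formulas (a theory) if it satisfies
every axiom under every assignment. -/
def Models (A : Structure Sg) (T : Set (Formula Sg)) : Prop :=
  ∀ φ ∈ T, ∀ ν : Assign A, Sat A ν φ

/-- Elementary equivalence: same sentences hold. -/
def ElemEquiv (A B : Structure Sg) : Prop :=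
  ∀ φ : Formula Sg, φ.IsSentence →
    ((∀ ν : Assign A, Sat A ν φ) ↔ (∀ ν : Assign B, Sat B ν φ))

/-- Substructures: sort-wise subsets closed under the functions. -/
structure Substructure (A : Structure Sg) : Type 1 where
  carrier : ∀ s : Sg.Sorts, Set (A.dom s)
  carrier_nonempty : ∀ s, (carrier s).Nonempty
  closed : ∀ (f : Sg.Func)
    (args : ∀ i : Fin (Sg.funcDom f).length, A.dom ((Sg.funcDom f).get i)),
    (∀ i, args i ∈ carrier _) → A.interpFunc f args ∈ carrier _

/-- The induced structure on a substructure. -/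
def Substructure.toStructure {A : Structure Sg} (B : Substructure A) : Structure Sg where
  dom s := ↥(B.carrier s)
  dom_nonempty s := ⟨⟨(B.carrier_nonempty s).choose, (B.carrier_nonempty s).choose_spec⟩⟩
  interpFunc f args :=
    ⟨A.interpFunc f fun i => (args i).1, B.closed f _ fun i => (args i).2⟩
  interpPred P args := A.interpPred P fun i => (args i).1

/-- View an assignment into a substructure as an assignment into the ambient structure. -/
def Substructure.amb {A : Structure Sg} (B : Substructure A)
    (ν : Assign B.toStructure) : Assign A := fun s n => (ν s n).1

/-- `B` is an elementary substructure of `A`. -/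
def Substructure.IsElementary {A : Structure Sg} (B : Substructure A) : Prop :=
  ∀ (φ : Formula Sg) (ν : Assign B.toStructure),
    Sat B.toStructure ν φ ↔ Sat A (B.amb ν) φ

/-- Isomorphisms of structures. -/
structure Iso (A B : Structure Sg) : Type 1 where
  toEquiv : ∀ s, A.dom s ≃ B.dom s
  map_func : ∀ (f : Sg.Func) args,
    toEquiv _ (A.interpFunc f args) = B.interpFunc f (fun i => toEquiv _ (args i))
  map_pred : ∀ (P : Sg.Pred) args,
    A.interpPred P args ↔ B.interpPred P (fun i => toEquiv _ (args i))

end MS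

/-- The cardinality of a signature: sorts + function symbols + predicate symbols. -/
noncomputable def MSSignature.card (Sg : MSSignature) : Cardinal :=
  Cardinal.mk Sg.Sorts + Cardinal.mk Sg.Func + Cardinal.mk Sg.Pred

/-- A countable signature. -/
def MSSignature.IsCountable (Sg : MSSignature) : Prop :=
  Countable Sg.Sorts ∧ Countable Sg.Func ∧ Countable Sg.Pred

namespace MS

variable {Sg : MSSignature}

/-- A splitting of a signature by a partition `Λ` of its sorts: every function and
predicate symbol uses sorts from a single part only. -/
structure Split (Sg : MSSignature) (Λ : Type) where
  sortPart : Sg.Sorts → Λ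
  funcPart : Sg.Func → Λ
  predPart : Sg.Pred → Λ
  func_dom : ∀ (f : Sg.Func) (i : Fin (Sg.funcDom f).length),
    sortPart ((Sg.funcDom f).get i) = funcPart f
  func_cod : ∀ f : Sg.Func, sortPart (Sg.funcCod f) = funcPart f
  pred_dom : ∀ (P : Sg.Pred) (i : Fin (Sg.predDom P).length),
    sortPart ((Sg.predDom P).get i) = predPart P

/-- A term lies in the sub-signature `Σ_l`. -/
def Term.inPart {Λ : Type} (sp : Split Sg Λ) (l : Λ) :
    ∀ {s : Sg.Sorts}, Term Sg s → Prop
  | s, .var _ _ => sp.sortPart s = l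
  | _, .app f args => sp.funcPart f = l ∧ ∀ i, Term.inPart sp l (args i)

/-- A formula lies in the sub-signature `Σ_l`: all its symbols and the sorts of all
its variables belong to the part `l`. -/
def Formula.inPart {Λ : Type} (sp : Split Sg Λ) (l : Λ) : Formula Sg → Prop
  | .eq (s := s) t u => sp.sortPart s = l ∧ t.inPart sp l ∧ u.inPart sp l
  | .pred P args => sp.predPart P = l ∧ ∀ i, (args i).inPart sp l
  | .falsum => True
  | .imp φ ψ => φ.inPart sp l ∧ ψ.inPart sp l
  | .all s _ φ => sp.sortPart s = l ∧ φ.inPart sp l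

/-- A generalized `Λ`-cube: a conjunction of formulas, each over a single
sub-signature, with pairwise distinct parts. -/
def Formula.IsGenCube {Λ : Type} (sp : Split Sg Λ) (φ : Formula Sg) : Prop :=
  ∃ L : List (Λ × Formula Sg), (L.map Prod.fst).Nodup ∧
    (∀ p ∈ L, (p.2).inPart sp p.1) ∧ φ = Formula.andList (L.map Prod.snd)

/-- A generalized `Λ`-clause: a disjunction of formulas, each over a single
sub-signature, with pairwise distinct parts. -/
def Formula.IsGenClause {Λ : Type} (sp : Split Sg Λ) (φ : Formula Sg) : Prop :=
  ∃ L : List (Λ × Formula Sg), (L.map Prod.fst).Nodup ∧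
    (∀ p ∈ L, (p.2).inPart sp p.1) ∧ φ = Formula.orList (L.map Prod.snd)

/-- Generalized disjunctive normal form: a disjunction of generalized cubes. -/
def Formula.IsGDNF {Λ : Type} (sp : Split Sg Λ) (φ : Formula Sg) : Prop :=
  ∃ L : List (Formula Sg), (∀ ψ ∈ L, ψ.IsGenCube sp) ∧ φ = Formula.orList L

/-- Generalized conjunctive normal form: a conjunction of generalized clauses. -/
def Formula.IsGCNF {Λ : Type} (sp : Split Sg Λ) (φ : Formula Sg) : Prop :=
  ∃ L : List (Formula Sg), (∀ ψ ∈ L, ψ.IsGenClause sp) ∧ φ = Formula.andList L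

/-- Logical equivalence of many-sorted formulas. -/
def LogEquiv (φ ψ : Formula Sg) : Prop :=
  ∀ (A : Structure Sg) (ν : Assign A), Sat A ν φ ↔ Sat A ν ψ

/-- The cardinality of the sub-signature `Σ_l` determined by a splitting. -/
noncomputable def Split.partCard {Λ : Type} (sp : Split Sg Λ) (l : Λ) : Cardinal :=
  Cardinal.mk {s : Sg.Sorts // sp.sortPart s = l} +
    Cardinal.mk {f : Sg.Func // sp.funcPart f = l} +
    Cardinal.mk {P : Sg.Pred // sp.predPart P = l}

end MS
namespace MS
open Classical
variable {Sg : MSSignature} {Λ : Type}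

section SatLemmas
variable {A : Structure Sg} {ν : Assign A}

theorem sat_not {φ : Formula Sg} : Sat A ν φ.not ↔ ¬ Sat A ν φ := Iff.rfl

theorem sat_and {φ ψ : Formula Sg} : Sat A ν (φ.and ψ) ↔ Sat A ν φ ∧ Sat A ν ψ := by
  show ¬ (Sat A ν φ → (Sat A ν ψ → False)) ↔ _; tauto

theorem sat_or {φ ψ : Formula Sg} : Sat A ν (φ.or ψ) ↔ Sat A ν φ ∨ Sat A ν ψ := by
  show ((Sat A ν φ → False) → Sat A ν ψ) ↔ _; tauto

theorem sat_ex {s n} {φ : Formula Sg} :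
    Sat A ν (Formula.ex s n φ) ↔ ∃ a : A.dom s, Sat A (ν.update s n a) φ := by
  show ¬ (∀ a : A.dom s, Sat A (ν.update s n a) φ → False) ↔ _
  push_neg; simp

theorem sat_andList {L : List (Formula Sg)} :
    Sat A ν (Formula.andList L) ↔ ∀ ψ ∈ L, Sat A ν ψ := by
  induction L with
  | nil => simpa [Formula.andList, sat_not] using (show ¬ Sat A ν .falsum by exact id)
  | cons φ L ih =>
    show Sat A ν (φ.and (Formula.andList L)) ↔ _
    rw [sat_and, ih]; simp

theorem sat_orList {L : List (Formula Sg)} :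
    Sat A ν (Formula.orList L) ↔ ∃ ψ ∈ L, Sat A ν ψ := by
  induction L with
  | nil => simp [Formula.orList]; exact id
  | cons φ L ih =>
    show Sat A ν (φ.or (Formula.orList L)) ↔ _
    rw [sat_or, ih]; simp

end SatLemmas

section InPart
variable (sp : Split Sg Λ)

theorem term_inPart : ∀ {s : Sg.Sorts} (t : Term Sg s), t.inPart sp (sp.sortPart s)
  | _, .var s n => rfl
  | _, .app f args => by
    refine ⟨(sp.func_cod f).symm ▸ rfl, fun i => ?_⟩
    have := term_inPart (args i)
    rwa [sp.func_dom f i, ← sp.func_cod f] at this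

variable {sp} {l : Λ}

theorem inPart_not {φ : Formula Sg} (h : φ.inPart sp l) : φ.not.inPart sp l :=
  ⟨h, trivial⟩

theorem inPart_and {φ ψ : Formula Sg} (h1 : φ.inPart sp l) (h2 : ψ.inPart sp l) :
    (φ.and ψ).inPart sp l := ⟨⟨h1, h2, trivial⟩, trivial⟩

theorem inPart_ex {s n} {φ : Formula Sg} (hs : sp.sortPart s = l) (h : φ.inPart sp l) :
    (Formula.ex s n φ).inPart sp l := ⟨⟨hs, h, trivial⟩, trivial⟩

end InPart

section Invariance
variable {sp : Split Sg Λ} {A : Structure Sg}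

theorem update_comm (ν : Assign A) {s s' : Sg.Sorts} (hss : s ≠ s') (n n' : ℕ)
    (a : A.dom s) (b : A.dom s') :
    (ν.update s n a).update s' n' b = (ν.update s' n' b).update s n a := by
  funext t m
  unfold Assign.update
  by_cases h1 : s' = t <;> by_cases h2 : s = t <;> simp_all

theorem update_other (ν : Assign A) {s t : Sg.Sorts} (h : s ≠ t) (n m : ℕ) (a : A.dom s) :
    ν.update s n a t m = ν t m := by
  unfold Assign.update; rw [dif_neg h]

theorem eval_update_of_inPart {l : Λ} {s : Sg.Sorts} (hs : sp.sortPart s ≠ l)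
    (ν : Assign A) (n : ℕ) (a : A.dom s) :
    ∀ {t : Sg.Sorts} (u : Term Sg t), u.inPart sp l →
      Term.eval (ν.update s n a) u = Term.eval ν u
  | _, .var s' m, h => by
    have hss : s ≠ s' := fun e => hs (e ▸ h)
    show ν.update s n a s' m = ν s' m
    exact update_other ν hss n m a
  | _, .app f args, h => by
    show A.interpFunc f _ = A.interpFunc f _
    congr 1; funext i
    exact eval_update_of_inPart hs ν n a (args i) (h.2 i)

theorem sat_update_of_inPart {l : Λ} {s : Sg.Sorts} (hs : sp.sortPart s ≠ l)
    (n : ℕ) (a : A.dom s) :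
    ∀ (φ : Formula Sg), φ.inPart sp l → ∀ (ν : Assign A),
      (Sat A (ν.update s n a) φ ↔ Sat A ν φ)
  | .eq t u, h, ν => by
    show Term.eval _ t = Term.eval _ u ↔ Term.eval _ t = Term.eval _ u
    rw [eval_update_of_inPart hs ν n a t h.2.1, eval_update_of_inPart hs ν n a u h.2.2]
  | .pred P args, h, ν => by
    show A.interpPred P _ ↔ A.interpPred P _
    have he : (fun i => Term.eval (ν.update s n a) (args i)) =
        fun i => Term.eval ν (args i) := by
      funext i; exact eval_update_of_inPart hs ν n a (args i) (h.2 i)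
    rw [he]
  | .falsum, _, ν => Iff.rfl
  | .imp φ ψ, h, ν => by
    show (Sat A (ν.update s n a) φ → Sat A (ν.update s n a) ψ) ↔
      (Sat A ν φ → Sat A ν ψ)
    rw [sat_update_of_inPart hs n a φ h.1 ν, sat_update_of_inPart hs n a ψ h.2 ν]
  | .all s' n' φ, h, ν => by
    have hss : s ≠ s' := fun e => hs (e ▸ h.1)
    show (∀ b, Sat A ((ν.update s n a).update s' n' b) φ) ↔ (∀ b, Sat A (ν.update s' n' b) φ)
    constructor <;> intro hb b
    · have := hb b
      rw [update_comm ν hss n n' a b] at this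
      exact (sat_update_of_inPart hs n a φ h.2 _).mp this
    · rw [update_comm ν hss n n' a b]
      exact (sat_update_of_inPart hs n a φ h.2 _).mpr (hb b)

end Invariance
end MS
namespace MS
variable {Sg : MSSignature} {Λ : Type}

theorem sat_andList_cons {A : Structure Sg} {ν : Assign A} {φ : Formula Sg}
    {L : List (Formula Sg)} :
    Sat A ν (Formula.andList (φ :: L)) ↔ Sat A ν φ ∧ Sat A ν (Formula.andList L) := sat_and

section Merge

open Classical in
noncomputable def mergeIns (p : Λ × Formula Sg) :
    List (Λ × Formula Sg) → List (Λ × Formula Sg)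
  | [] => [p]
  | q :: M => if p.1 = q.1 then (q.1, p.2.and q.2) :: M else q :: mergeIns p M

theorem mergeIns_fst_mem (p : Λ × Formula Sg) (x : Λ) :
    ∀ M : List (Λ × Formula Sg),
      (x ∈ (mergeIns p M).map Prod.fst ↔ x = p.1 ∨ x ∈ M.map Prod.fst)
  | [] => by simp [mergeIns]
  | q :: M => by
    simp only [mergeIns]
    by_cases h : p.1 = q.1
    · rw [if_pos h]
      simp only [List.map_cons, List.mem_cons]
      rw [h]
      tauto
    · rw [if_neg h]
      simp only [List.map_cons, List.mem_cons, mergeIns_fst_mem p x M]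
      tauto

theorem mergeIns_nodup (p : Λ × Formula Sg) :
    ∀ M : List (Λ × Formula Sg), (M.map Prod.fst).Nodup →
      ((mergeIns p M).map Prod.fst).Nodup
  | [], _ => by simp [mergeIns]
  | q :: M, h => by
    simp only [mergeIns]
    by_cases hpq : p.1 = q.1
    · rw [if_pos hpq]; simpa using h
    · rw [if_neg hpq]
      simp only [List.map_cons, List.nodup_cons] at h ⊢
      refine ⟨fun hx => ?_, mergeIns_nodup p M h.2⟩
      rcases (mergeIns_fst_mem p q.1 M).mp hx with he | hm
      · exact hpq he.symm
      · exact h.1 hm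

theorem mergeIns_inPart {sp : Split Sg Λ} {p : Λ × Formula Sg}
    (hp : (p.2).inPart sp p.1) :
    ∀ M : List (Λ × Formula Sg), (∀ q ∈ M, (q.2).inPart sp q.1) →
      ∀ r ∈ mergeIns p M, (r.2).inPart sp r.1
  | [], _ => by simpa [mergeIns] using hp
  | q :: M, h => by
    simp only [mergeIns]
    by_cases hpq : p.1 = q.1
    · rw [if_pos hpq]
      intro r hr
      rcases List.mem_cons.mp hr with rfl | hm
      · exact inPart_and (hpq ▸ hp) (h q (by simp))
      · exact h r (List.mem_cons_of_mem _ hm)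
    · rw [if_neg hpq]
      intro r hr
      rcases List.mem_cons.mp hr with rfl | hm
      · exact h r (by simp)
      · exact mergeIns_inPart hp M (fun q' hq' => h q' (List.mem_cons_of_mem _ hq')) r hm

theorem mergeIns_sat {A : Structure Sg} {ν : Assign A} (p : Λ × Formula Sg) :
    ∀ M : List (Λ × Formula Sg),
      Sat A ν (Formula.andList ((mergeIns p M).map Prod.snd)) ↔
        Sat A ν p.2 ∧ Sat A ν (Formula.andList (M.map Prod.snd))
  | [] => by simp [mergeIns, sat_andList]
  | q :: M => by
    simp only [mergeIns]
    by_cases hpq : p.1 = q.1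
    · rw [if_pos hpq]
      simp only [List.map_cons, sat_andList_cons, sat_and]
      tauto
    · rw [if_neg hpq]
      simp only [List.map_cons, sat_andList_cons, mergeIns_sat p M]
      tauto

noncomputable def normList : List (Λ × Formula Sg) → List (Λ × Formula Sg)
  | [] => []
  | p :: L => mergeIns p (normList L)

theorem normList_nodup : ∀ L : List (Λ × Formula Sg), ((normList L).map Prod.fst).Nodup
  | [] => by simp [normList]
  | p :: L => mergeIns_nodup p (normList L) (normList_nodup L)

theorem normList_inPart {sp : Split Sg Λ} :
    ∀ L : List (Λ × Formula Sg), (∀ p ∈ L, (p.2).inPart sp p.1) →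
      ∀ q ∈ normList L, (q.2).inPart sp q.1
  | [], _ => by simp [normList]
  | p :: L, h => by
    exact mergeIns_inPart (h p (by simp)) (normList L)
      (normList_inPart L (fun q hq => h q (List.mem_cons_of_mem _ hq)))

theorem normList_sat {A : Structure Sg} {ν : Assign A} :
    ∀ L : List (Λ × Formula Sg),
      Sat A ν (Formula.andList ((normList L).map Prod.snd)) ↔
        Sat A ν (Formula.andList (L.map Prod.snd))
  | [] => by simp [normList]
  | p :: L => by
    simp only [normList, mergeIns_sat p (normList L), List.map_cons, sat_andList_cons,
      normList_sat L]

theorem genCube_normList (sp : Split Sg Λ) (L : List (Λ × Formula Sg))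
    (h : ∀ p ∈ L, (p.2).inPart sp p.1) :
    (Formula.andList ((normList L).map Prod.snd)).IsGenCube sp :=
  ⟨normList L, normList_nodup L, normList_inPart L h, rfl⟩

theorem cube_and {sp : Split Sg Λ} {c1 c2 : Formula Sg}
    (h1 : c1.IsGenCube sp) (h2 : c2.IsGenCube sp) :
    ∃ c : Formula Sg, c.IsGenCube sp ∧ ∀ (A : Structure Sg) (ν : Assign A),
      Sat A ν c ↔ Sat A ν c1 ∧ Sat A ν c2 := by
  obtain ⟨M1, _, hp1, rfl⟩ := h1
  obtain ⟨M2, _, hp2, rfl⟩ := h2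
  refine ⟨_, genCube_normList sp (M1 ++ M2)
    (fun p hp => (List.mem_append.mp hp).elim (hp1 p) (hp2 p)), fun A ν => ?_⟩
  rw [normList_sat]
  simp only [List.map_append, sat_andList, List.mem_append]
  exact ⟨fun h => ⟨fun ψ hψ => h ψ (Or.inl hψ), fun ψ hψ => h ψ (Or.inr hψ)⟩,
    fun h ψ hψ => hψ.elim (h.1 ψ) (h.2 ψ)⟩

end Merge
end MS
namespace MS
variable {Sg : MSSignature} {Λ : Type}

theorem sat_update_andList {sp : Split Sg Λ} {A : Structure Sg} {s : Sg.Sorts} {n : ℕ}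
    {a : A.dom s} {M : List (Λ × Formula Sg)}
    (h : ∀ p ∈ M, (p.2).inPart sp p.1 ∧ sp.sortPart s ≠ p.1) (ν : Assign A) :
    Sat A (ν.update s n a) (Formula.andList (M.map Prod.snd)) ↔
      Sat A ν (Formula.andList (M.map Prod.snd)) := by
  simp only [sat_andList, List.mem_map]
  constructor <;> intro hh ψ hψ <;> obtain ⟨p, hp, rfl⟩ := hψ
  · exact (sat_update_of_inPart (h p hp).2 n a p.2 (h p hp).1 ν).mp (hh _ ⟨p, hp, rfl⟩)
  · exact (sat_update_of_inPart (h p hp).2 n a p.2 (h p hp).1 ν).mpr (hh _ ⟨p, hp, rfl⟩)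

theorem push_ex {sp : Split Sg Λ} (s : Sg.Sorts) (n : ℕ) :
    ∀ M : List (Λ × Formula Sg), (M.map Prod.fst).Nodup →
      (∀ p ∈ M, (p.2).inPart sp p.1) →
      ∃ M' : List (Λ × Formula Sg), (M'.map Prod.fst).Nodup ∧
        (∀ p ∈ M', (p.2).inPart sp p.1) ∧
        ∀ (A : Structure Sg) (ν : Assign A),
          ((∃ a : A.dom s, Sat A (ν.update s n a) (Formula.andList (M.map Prod.snd))) ↔
            Sat A ν (Formula.andList (M'.map Prod.snd)))
  | [], _, _ => ⟨[], by simp, by simp, fun A ν => by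
      constructor
      · intro _; rw [sat_andList]; intro ψ hψ; simp at hψ
      · intro _
        obtain ⟨a⟩ := A.dom_nonempty s
        refine ⟨a, ?_⟩
        rw [sat_andList]; intro ψ hψ; simp at hψ⟩
  | (l', ψ) :: M, hn, hp => by
    simp only [List.map_cons, List.nodup_cons] at hn
    by_cases hl : sp.sortPart s = l'
    · refine ⟨(l', Formula.ex s n ψ) :: M, ?_, ?_, ?_⟩
      · simp only [List.map_cons, List.nodup_cons]; exact hn
      · intro p hp'
        rcases List.mem_cons.mp hp' with rfl | hm
        · exact inPart_ex hl (hp (l', ψ) (by simp))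
        · exact hp p (List.mem_cons_of_mem _ hm)
      · intro A ν
        have hM : ∀ p ∈ M, (p.2).inPart sp p.1 ∧ sp.sortPart s ≠ p.1 := by
          intro p hm
          refine ⟨hp p (List.mem_cons_of_mem _ hm), fun he => hn.1 ?_⟩
          rw [hl] at he
          exact he ▸ (List.mem_map.mpr ⟨p, hm, rfl⟩)
        simp only [List.map_cons, sat_andList_cons]
        constructor
        · rintro ⟨a, h1, h2⟩
          rw [sat_update_andList hM ν] at h2
          exact ⟨sat_ex.mpr ⟨a, h1⟩, h2⟩
        · rintro ⟨h1, h2⟩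
          obtain ⟨a, ha⟩ := sat_ex.mp h1
          exact ⟨a, ha, (sat_update_andList hM ν).mpr h2⟩
    · obtain ⟨M'', hn'', hp'', hs''⟩ :=
        push_ex s n M hn.2 (fun p h => hp p (List.mem_cons_of_mem _ h))
      have hψ : ψ.inPart sp l' := hp (l', ψ) (by simp)
      refine ⟨mergeIns (l', ψ) M'', mergeIns_nodup _ _ hn'',
        mergeIns_inPart hψ M'' hp'', fun A ν => ?_⟩
      rw [mergeIns_sat]
      simp only [List.map_cons, sat_andList_cons]
      constructor
      · rintro ⟨a, h1, h2⟩
        rw [sat_update_of_inPart hl n a ψ hψ ν] at h1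
        exact ⟨h1, (hs'' A ν).mp ⟨a, h2⟩⟩
      · rintro ⟨h1, h2⟩
        obtain ⟨a, ha⟩ := (hs'' A ν).mpr h2
        exact ⟨a, (sat_update_of_inPart hl n a ψ hψ ν).mpr h1, ha⟩

theorem exCubes {sp : Split Sg Λ} (s : Sg.Sorts) (n : ℕ) :
    ∀ L : List (Formula Sg), (∀ c ∈ L, c.IsGenCube sp) →
      ∃ L' : List (Formula Sg), (∀ c ∈ L', c.IsGenCube sp) ∧
        ∀ (A : Structure Sg) (ν : Assign A),
          ((∃ a : A.dom s, ∃ c ∈ L, Sat A (ν.update s n a) c) ↔ ∃ c ∈ L', Sat A ν c)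
  | [], _ => ⟨[], by simp, by simp⟩
  | c :: L, h => by
    obtain ⟨M, hnd, hpp, rfl⟩ := h c (by simp)
    obtain ⟨L'', hc'', hs''⟩ := exCubes s n L (fun d hd => h d (List.mem_cons_of_mem _ hd))
    obtain ⟨M', hn', hp', hs'⟩ := push_ex s n M hnd hpp
    refine ⟨Formula.andList (M'.map Prod.snd) :: L'', ?_, fun A ν => ?_⟩
    · intro d hd
      rcases List.mem_cons.mp hd with rfl | hm
      · exact ⟨M', hn', hp', rfl⟩
      · exact hc'' d hm
    · simp only [List.mem_cons]
      constructor
      · rintro ⟨a, d, (rfl | hd), hsat⟩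
        · exact ⟨_, Or.inl rfl, (hs' A ν).mp ⟨a, hsat⟩⟩
        · obtain ⟨d', hd', hh⟩ := (hs'' A ν).mp ⟨a, d, hd, hsat⟩
          exact ⟨d', Or.inr hd', hh⟩
      · rintro ⟨d, (rfl | hd), hsat⟩
        · obtain ⟨a, ha⟩ := (hs' A ν).mpr hsat
          exact ⟨a, _, Or.inl rfl, ha⟩
        · obtain ⟨a, d', hd', hh⟩ := (hs'' A ν).mpr ⟨d, hd, hsat⟩
          exact ⟨a, d', Or.inr hd', hh⟩

theorem prodCube1 {sp : Split Sg Λ} (c : Formula Sg) (hc : c.IsGenCube sp) :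
    ∀ L2 : List (Formula Sg), (∀ d ∈ L2, d.IsGenCube sp) →
      ∃ L : List (Formula Sg), (∀ d ∈ L, d.IsGenCube sp) ∧
        ∀ (A : Structure Sg) (ν : Assign A),
          ((Sat A ν c ∧ ∃ d ∈ L2, Sat A ν d) ↔ ∃ d ∈ L, Sat A ν d)
  | [], _ => ⟨[], by simp, by simp⟩
  | d :: L2, h => by
    obtain ⟨e, he, hse⟩ := cube_and hc (h d (by simp))
    obtain ⟨L', hL', hsL'⟩ := prodCube1 c hc L2 (fun x hx => h x (List.mem_cons_of_mem _ hx))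
    refine ⟨e :: L', ?_, fun A ν => ?_⟩
    · intro x hx
      rcases List.mem_cons.mp hx with rfl | hm
      · exact he
      · exact hL' x hm
    · simp only [List.mem_cons]
      constructor
      · rintro ⟨h1, x, (rfl | hx), h2⟩
        · exact ⟨e, Or.inl rfl, (hse A ν).mpr ⟨h1, h2⟩⟩
        · obtain ⟨y, hy, hsy⟩ := (hsL' A ν).mp ⟨h1, x, hx, h2⟩
          exact ⟨y, Or.inr hy, hsy⟩
      · rintro ⟨x, (rfl | hx), h2⟩
        · obtain ⟨h1, hd⟩ := (hse A ν).mp h2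
          exact ⟨h1, d, Or.inl rfl, hd⟩
        · obtain ⟨h1, y, hy, hsy⟩ := (hsL' A ν).mpr ⟨x, hx, h2⟩
          exact ⟨h1, y, Or.inr hy, hsy⟩

theorem prodCubes {sp : Split Sg Λ} :
    ∀ L1 L2 : List (Formula Sg), (∀ c ∈ L1, c.IsGenCube sp) → (∀ c ∈ L2, c.IsGenCube sp) →
      ∃ L : List (Formula Sg), (∀ c ∈ L, c.IsGenCube sp) ∧
        ∀ (A : Structure Sg) (ν : Assign A),
          (((∃ c ∈ L1, Sat A ν c) ∧ (∃ c ∈ L2, Sat A ν c)) ↔ ∃ c ∈ L, Sat A ν c)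
  | [], L2, _, _ => ⟨[], by simp, by simp⟩
  | c :: L1, L2, h1, h2 => by
    obtain ⟨Lc, hLc, hsLc⟩ := prodCube1 c (h1 c (by simp)) L2 h2
    obtain ⟨L', hL', hsL'⟩ := prodCubes L1 L2 (fun d hd => h1 d (List.mem_cons_of_mem _ hd)) h2
    refine ⟨Lc ++ L', fun d hd => (List.mem_append.mp hd).elim (hLc d) (hL' d), fun A ν => ?_⟩
    constructor
    · rintro ⟨⟨x, hx, hsx⟩, hR⟩
      rcases List.mem_cons.mp hx with rfl | hx'
      · obtain ⟨y, hy, hsy⟩ := (hsLc A ν).mp ⟨hsx, hR⟩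
        exact ⟨y, List.mem_append.mpr (Or.inl hy), hsy⟩
      · obtain ⟨y, hy, hsy⟩ := (hsL' A ν).mp ⟨⟨x, hx', hsx⟩, hR⟩
        exact ⟨y, List.mem_append.mpr (Or.inr hy), hsy⟩
    · rintro ⟨y, hy, hsy⟩
      rcases List.mem_append.mp hy with hy' | hy'
      · obtain ⟨ha, hb⟩ := (hsLc A ν).mpr ⟨y, hy', hsy⟩
        exact ⟨⟨c, by simp, ha⟩, hb⟩
      · obtain ⟨⟨x, hx, hsx⟩, hb⟩ := (hsL' A ν).mpr ⟨y, hy', hsy⟩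
        exact ⟨⟨x, List.mem_cons_of_mem _ hx, hsx⟩, hb⟩

theorem negCubes {sp : Split Sg Λ} :
    ∀ L : List (Formula Sg), (∀ c ∈ L, c.IsGenCube sp) →
      ∃ L' : List (Formula Sg), (∀ c ∈ L', c.IsGenCube sp) ∧
        ∀ (A : Structure Sg) (ν : Assign A),
          ((¬ ∃ c ∈ L, Sat A ν c) ↔ ∃ c ∈ L', Sat A ν c)
  | [], _ => ⟨[Formula.andList []], by
      intro c hc; simp at hc; subst hc
      exact ⟨[], by simp, by simp, rfl⟩,
      fun A ν => by simp [sat_andList]⟩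
  | c :: L, h => by
    obtain ⟨M, hnd, hpp, rfl⟩ := h c (by simp)
    obtain ⟨L'', hc'', hs''⟩ := negCubes L (fun d hd => h d (List.mem_cons_of_mem _ hd))
    have hcubes : ∀ d ∈ M.map (fun p => Formula.andList [(p.2).not]), d.IsGenCube sp := by
      intro d hd
      obtain ⟨p, hpm, rfl⟩ := List.mem_map.mp hd
      exact ⟨[(p.1, (p.2).not)], by simp, by simpa using inPart_not (hpp p hpm), rfl⟩
    have hsatc : ∀ (A : Structure Sg) (ν : Assign A),
        ((¬ Sat A ν (Formula.andList (M.map Prod.snd))) ↔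
          ∃ d ∈ M.map (fun p => Formula.andList [(p.2).not]), Sat A ν d) := by
      intro A ν
      rw [sat_andList]
      push_neg
      constructor
      · rintro ⟨ψ, hψ, hns⟩
        obtain ⟨p, hpm, rfl⟩ := List.mem_map.mp hψ
        refine ⟨Formula.andList [(p.2).not], List.mem_map.mpr ⟨p, hpm, rfl⟩, ?_⟩
        rw [sat_andList]
        intro χ hχ; simp at hχ; subst hχ
        exact hns
      · rintro ⟨d, hd, hsd⟩
        obtain ⟨p, hpm, rfl⟩ := List.mem_map.mp hd
        refine ⟨p.2, List.mem_map.mpr ⟨p, hpm, rfl⟩, ?_⟩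
        exact sat_andList.mp hsd ((p.2).not) (by simp)
    obtain ⟨Lp, hLp, hsLp⟩ := prodCubes _ L'' hcubes hc''
    refine ⟨Lp, hLp, fun A ν => ?_⟩
    rw [← hsLp A ν, ← hsatc A ν, ← hs'' A ν]
    simp only [List.mem_cons]
    constructor
    · intro hh
      constructor
      · intro hc1; exact hh ⟨_, Or.inl rfl, hc1⟩
      · rintro ⟨d, hd, hsd⟩; exact hh ⟨d, Or.inr hd, hsd⟩
    · rintro ⟨h1, h2⟩ ⟨d, (rfl | hd), hsd⟩
      · exact h1 hsd
      · exact h2 ⟨d, hd, hsd⟩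

def GDNFishP (sp : Split Sg Λ) (φ : Formula Sg) : Prop :=
  ∃ L : List (Formula Sg), (∀ c ∈ L, c.IsGenCube sp) ∧
    ∀ (A : Structure Sg) (ν : Assign A), Sat A ν φ ↔ ∃ c ∈ L, Sat A ν c

theorem gdnfish_of_inPart {sp : Split Sg Λ} {l : Λ} {φ : Formula Sg}
    (h : φ.inPart sp l) : GDNFishP sp φ := by
  refine ⟨[Formula.andList [φ]], ?_, fun A ν => ?_⟩
  · intro c hc; simp at hc; subst hc
    exact ⟨[(l, φ)], by simp, by simpa using h, rfl⟩
  · simp only [List.mem_cons, List.not_mem_nil, or_false]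
    constructor
    · intro hs
      refine ⟨_, rfl, ?_⟩
      rw [sat_andList]
      intro ψ hψ; simp at hψ; subst hψ; exact hs
    · rintro ⟨d, rfl, hsd⟩
      exact sat_andList.mp hsd φ (by simp)

theorem gdnfish (sp : Split Sg Λ) : ∀ φ : Formula Sg, GDNFishP sp φ
  | @Formula.eq _ s t u =>
    gdnfish_of_inPart (l := sp.sortPart s) ⟨rfl, term_inPart sp t, term_inPart sp u⟩
  | .pred P args =>
    gdnfish_of_inPart (l := sp.predPart P)
      ⟨rfl, fun i => sp.pred_dom P i ▸ term_inPart sp (args i)⟩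
  | .falsum => ⟨[], by simp, fun A ν => by
      constructor
      · intro hs; exact absurd hs (fun h => h)
      · rintro ⟨c, hc, _⟩; simp at hc⟩
  | .imp φ ψ => by
    obtain ⟨L1, h1, hs1⟩ := gdnfish sp φ
    obtain ⟨L2, h2, hs2⟩ := gdnfish sp ψ
    obtain ⟨N, hN, hsN⟩ := negCubes L1 h1
    refine ⟨N ++ L2, fun c hc => (List.mem_append.mp hc).elim (hN c) (h2 c), fun A ν => ?_⟩
    show (Sat A ν φ → Sat A ν ψ) ↔ _
    rw [hs1 A ν, hs2 A ν]
    constructor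
    · intro hh
      by_cases hφ : ∃ c ∈ L1, Sat A ν c
      · obtain ⟨c, hc, hsc⟩ := hh hφ
        exact ⟨c, List.mem_append.mpr (Or.inr hc), hsc⟩
      · obtain ⟨c, hc, hsc⟩ := (hsN A ν).mp hφ
        exact ⟨c, List.mem_append.mpr (Or.inl hc), hsc⟩
    · rintro ⟨c, hc, hsc⟩ hφ
      rcases List.mem_append.mp hc with h' | h'
      · exact absurd hφ ((hsN A ν).mpr ⟨c, h', hsc⟩)
      · exact ⟨c, h', hsc⟩
  | .all s n φ => by
    obtain ⟨L1, h1, hs1⟩ := gdnfish sp φ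
    obtain ⟨N, hN, hsN⟩ := negCubes L1 h1
    obtain ⟨E, hE, hsE⟩ := exCubes s n N hN
    obtain ⟨F, hF, hsF⟩ := negCubes E hE
    refine ⟨F, hF, fun A ν => ?_⟩
    show (∀ a : A.dom s, Sat A (ν.update s n a) φ) ↔ _
    rw [← hsF A ν, ← hsE A ν]
    constructor
    · rintro hh ⟨a, hex⟩
      exact (hsN A (ν.update s n a)).mpr hex ((hs1 A _).mp (hh a))
    · intro hh a
      rw [hs1 A _]
      by_contra hc
      exact hh ⟨a, (hsN A _).mp hc⟩

end MS

open MS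

/-- In a split signature, every formula is logically equivalent to one in
generalized disjunctive normal form. -/
theorem split_GDNF {Sg : MSSignature} {Λ : Type} (sp : Split Sg Λ) (φ : Formula Sg) :
    ∃ ψ : Formula Sg, ψ.IsGDNF sp ∧ LogEquiv φ ψ := by
  obtain ⟨L, hL, hs⟩ := MS.gdnfish sp φ
  refine ⟨Formula.orList L, ⟨L, hL, rfl⟩, fun A ν => ?_⟩
  rw [MS.sat_orList]
  exact hs A ν
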